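/- For every entire function f : ℂ → ℂ, every z ∈ ℂ with |z| > 1, and every n ∈ ℕ, one has |f^(n)(z)| ≤ n! · e^{3/2} · |z|^n · e^{|z|²/2} · sup_{w ∈ ℂ} |f(w)| e^{-|w|²/2}, provided that supremum is finite. -/

import Mathlib

open Complex Real

/-- Pointwise derivative estimate outside the unit disc for entire functions with
finite Fock growth norm. -/
theorem stmt_1 (f : ℂ → ℂ) (hf : Differentiable ℂ f)
    (hbdd : BddAbove (Set.range fun w : ℂ =>
      ‖f w‖ * Real.exp (-(‖w‖) ^ 2 / 2)))
    (z : ℂ) (hz : 1 < ‖z‖) (n : ℕ) :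
    ‖iteratedDeriv n f z‖ ≤
      (n.factorial : ℝ) * Real.exp (3 / 2) * (‖z‖) ^ n *
        Real.exp ((‖z‖) ^ 2 / 2) *
        ⨆ w : ℂ, ‖f w‖ * Real.exp (-(‖w‖) ^ 2 / 2) := by
  set M : ℝ := ⨆ w : ℂ, ‖f w‖ * Real.exp (-(‖w‖) ^ 2 / 2) with hM
  have hMle : ∀ w : ℂ, ‖f w‖ * Real.exp (-(‖w‖) ^ 2 / 2) ≤ M :=
    fun w => le_ciSup hbdd w
  have hM0 : 0 ≤ M := le_trans (by positivity) (hMle 0)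
  have hz0 : (0:ℝ) < ‖z‖ := lt_trans one_pos hz
  set R : ℝ := (‖z‖)⁻¹ with hR
  have hR0 : 0 < R := inv_pos.mpr hz0
  set Rn : NNReal := ⟨R, hR0.le⟩ with hRn
  have hRn0 : 0 < Rn := hR0
  have hball := hf.hasFPowerSeriesOnBall z hRn0
  set p := cauchyPowerSeries f z Rn with hp
  -- pointwise bound on the circle
  set C : ℝ := M * Real.exp ((‖z‖) ^ 2 / 2 + 3 / 2) with hC
  have hC0 : 0 ≤ C := by positivity
  have hpoint : ∀ θ : ℝ, ‖f (circleMap z R θ)‖ ≤ C := by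
    intro θ
    set w := circleMap z R θ with hw
    have habs : ‖w‖ ≤ ‖z‖ + R := by
      have : ‖w - z‖ = R := by
        rw [hw, circleMap_sub_center]
        simpa using abs_of_pos hR0
      calc ‖w‖ = ‖z + (w - z)‖ := by ring_nf
        _ ≤ ‖z‖ + ‖w - z‖ := norm_add_le _ _
        _ = ‖z‖ + R := by rw [this]
    have h1 : ‖f w‖ ≤ M * Real.exp ((‖w‖) ^ 2 / 2) := by
      have := hMle w
      have hexp : (0:ℝ) < Real.exp (-(‖w‖) ^ 2 / 2) := Real.exp_pos _
      calc ‖f w‖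
          = ‖f w‖ * Real.exp (-(‖w‖) ^ 2 / 2) *
            Real.exp ((‖w‖) ^ 2 / 2) := by
            rw [mul_assoc, ← Real.exp_add]; ring_nf; simp
        _ ≤ M * Real.exp ((‖w‖) ^ 2 / 2) :=
            mul_le_mul_of_nonneg_right this (Real.exp_pos _).le
    have h2 : (‖w‖) ^ 2 / 2 ≤ (‖z‖) ^ 2 / 2 + 3 / 2 := by
      have hsq : (‖w‖) ^ 2 ≤ (‖z‖ + R) ^ 2 :=
        pow_le_pow_left₀ (norm_nonneg w) habs 2
      have hRle : R ≤ 1 := by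
        rw [hR]; exact (inv_le_one_iff₀.mpr (Or.inr hz.le))
      have hexpand : (‖z‖ + R) ^ 2 = (‖z‖) ^ 2 + 2 * (‖z‖ * R) + R ^ 2 := by ring
      have hzR : ‖z‖ * R = 1 := mul_inv_cancel₀ hz0.ne'
      have hR2 : R ^ 2 ≤ 1 := by nlinarith
      nlinarith
    calc ‖f w‖ = ‖f w‖ := rfl
      _ ≤ M * Real.exp ((‖w‖) ^ 2 / 2) := h1
      _ ≤ M * Real.exp ((‖z‖) ^ 2 / 2 + 3 / 2) :=
          mul_le_mul_of_nonneg_left (Real.exp_le_exp.mpr h2) hM0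
  -- coefficient bound
  have hcoef : ‖p n‖ ≤ C * (‖z‖) ^ n := by
    have h := norm_cauchyPowerSeries_le f z (Rn : ℝ) n
    have hint : (∫ θ : ℝ in (0)..2 * Real.pi, ‖f (circleMap z (Rn : ℝ) θ)‖) ≤
        2 * Real.pi * C := by
      have hcont : Continuous fun θ : ℝ => ‖f (circleMap z (Rn : ℝ) θ)‖ :=
        (hf.continuous.comp (continuous_circleMap z _)).norm
      calc (∫ θ : ℝ in (0)..2 * Real.pi, ‖f (circleMap z (Rn : ℝ) θ)‖)
          ≤ ∫ _ : ℝ in (0)..2 * Real.pi, C := by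
            apply intervalIntegral.integral_mono_on Real.two_pi_pos.le
              (hcont.intervalIntegrable _ _) (intervalIntegrable_const)
            intro θ _
            exact hpoint θ
        _ = 2 * Real.pi * C := by simp [hC]; ring
    have habsR : |(Rn : ℝ)|⁻¹ = ‖z‖ := by
      rw [show ((Rn : ℝ)) = R from rfl, abs_of_pos hR0, hR, inv_inv]
    calc ‖p n‖ ≤ ((2 * Real.pi)⁻¹ * ∫ θ : ℝ in (0)..2 * Real.pi,
          ‖f (circleMap z Rn θ)‖) * |(Rn : ℝ)|⁻¹ ^ n := h
      _ ≤ ((2 * Real.pi)⁻¹ * (2 * Real.pi * C)) * |(Rn : ℝ)|⁻¹ ^ n := by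
          apply mul_le_mul_of_nonneg_right _ (by positivity)
          exact mul_le_mul_of_nonneg_left hint (by positivity)
      _ = C * (‖z‖) ^ n := by
          rw [habsR, inv_mul_cancel_left₀ (by positivity : (2 * Real.pi) ≠ 0)]
  -- relate iteratedDeriv to the coefficient
  have hkey : (n.factorial : ℝ) • (p n fun _ => (1:ℂ)) = iteratedFDeriv ℂ n f z (fun _ => 1) := by
    have := hball.factorial_smul (1:ℂ) n
    simpa using this
  have hiter : ‖iteratedDeriv n f z‖ ≤ (n.factorial : ℝ) * ‖p n‖ := by
    rw [iteratedDeriv_eq_iteratedFDeriv]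
    calc ‖iteratedFDeriv ℂ n f z (fun _ => 1)‖
        = ‖(n.factorial : ℝ) • (p n fun _ => (1:ℂ))‖ := by rw [hkey]
      _ = (n.factorial : ℝ) * ‖p n fun _ => (1:ℂ)‖ := by
          rw [norm_smul]; simp
      _ ≤ (n.factorial : ℝ) * ‖p n‖ := by
          apply mul_le_mul_of_nonneg_left _ (by positivity)
          calc ‖p n fun _ => (1:ℂ)‖ ≤ ‖p n‖ * ∏ _i : Fin n, ‖(1:ℂ)‖ :=
            (p n).le_opNorm _
          _ = ‖p n‖ := by simp
  calc ‖iteratedDeriv n f z‖ ≤ (n.factorial : ℝ) * ‖p n‖ := hiter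
    _ ≤ (n.factorial : ℝ) * (C * (‖z‖) ^ n) :=
        mul_le_mul_of_nonneg_left hcoef (by positivity)
    _ = (n.factorial : ℝ) * Real.exp (3 / 2) * (‖z‖) ^ n *
        Real.exp ((‖z‖) ^ 2 / 2) * M := by
        rw [hC, Real.exp_add]; ring
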